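/- arXiv:hep-th/9612007 — 5 statements merged into one kernel-verified Lean document; each statement's English description precedes it below -/
import Mathlib

section
/- Let γ be an automorphism of a unital *-algebra C satisfying γ* = γ⁻¹, and let ω be a γ-invariant state on C such that for every A ∈ C the sequence n ↦ ω(A* γⁿ(A)) is bounded. Then |ω(A* γ(A))| ≤ ω(A* A) for all A ∈ C. -/
open scoped ComplexOrder

/-- Let `γ` be an automorphism of a unital `*`-algebra `C` with `γ* = γ⁻¹`, and `ω` a
`γ`-invariant state on `C` such that for every `a` the sequence `n ↦ ω(a* γⁿ(a))` is
bounded.  Then `|ω(a* γ(a))| ≤ ω(a* a)` for all `a`. -/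
theorem ground_state_bound
    {C : Type*} [Ring C] [StarRing C] [Algebra ℂ C]
    (γ : C ≃ₐ[ℂ] C)
    (hγadj : ∀ a, star (γ (star a)) = γ.symm a)
    (ω : C →ₗ[ℂ] ℂ)
    (hone : ω 1 = 1)
    (hpos : ∀ a, 0 ≤ ω (star a * a))
    (hinv : ∀ a, ω (γ a) = ω a)
    (hbdd : ∀ a, ∃ K : ℝ, ∀ n : ℕ, ‖ω (star a * (⇑γ)^[n] a)‖ ≤ K) :
    ∀ a, (‖ω (star a * γ a)‖ : ℂ) ≤ ω (star a * a) := by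
  intro a
  classical
  have hstarγ : ∀ x : C, star (γ x) = γ.symm (star x) := by
    intro x
    simpa using hγadj (star x)
  have hstar_iter : ∀ (n : ℕ) (x : C), star ((⇑γ)^[n] x) = (⇑γ.symm)^[n] (star x) := by
    intro n
    induction n with
    | zero => intro x; simp
    | succ n ih =>
        intro x
        rw [Function.iterate_succ_apply', Function.iterate_succ_apply', hstarγ, ih]
  have hinv_iter : ∀ (n : ℕ) (x : C), ω ((⇑γ)^[n] x) = ω x := by
    intro n
    induction n with
    | zero => intro x; simp
    | succ n ih => intro x; rw [Function.iterate_succ_apply', hinv, ih]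
  have hmul_iter : ∀ (n : ℕ) (x y : C), (⇑γ)^[n] (x * y) = (⇑γ)^[n] x * (⇑γ)^[n] y := by
    intro n
    induction n with
    | zero => intro x y; simp
    | succ n ih =>
        intro x y
        simp [Function.iterate_succ_apply', ih, map_mul]
  have hli : ∀ (n : ℕ) (x : C), (⇑γ)^[n] ((⇑γ.symm)^[n] x) = x := by
    intro n
    exact Function.LeftInverse.iterate (fun x => γ.apply_symm_apply x) n
  have key : ∀ (n : ℕ) (x : C), ω (star ((⇑γ)^[n] a) * x) = ω (star a * (⇑γ)^[n] x) := by
    intro n x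
    rw [hstar_iter, ← hinv_iter n ((⇑γ.symm)^[n] (star a) * x), hmul_iter, hli]
  set F : ℕ → ℂ := fun n => ω (star a * (⇑γ)^[n] a) with hF
  have hF2 : ∀ n : ℕ, ω (star ((⇑γ)^[n] a) * ((⇑γ)^[n] a)) = F (2 * n) := by
    intro n
    rw [key, ← Function.iterate_add_apply, two_mul]
  have hFn : ∀ n : ℕ, ω (star ((⇑γ)^[n] a) * a) = F n := by
    intro n
    rw [key]
  have hpos' : ∀ x : C, (((ω (star x * x)).re : ℂ) = ω (star x * x)) ∧ 0 ≤ (ω (star x * x)).re := by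
    intro x
    obtain ⟨h1, h2⟩ := Complex.le_def.mp (hpos x)
    constructor
    · apply Complex.ext
      · simp
      · have him : (ω (star x * x)).im = 0 := by simpa using h2.symm
        simp [him]
    · simpa using h1
  have hFre : ∀ n, (((F (2 * n)).re : ℂ) = F (2 * n)) ∧ 0 ≤ (F (2 * n)).re := by
    intro n
    have h := hpos' ((⇑γ)^[n] a)
    rwa [hF2 n] at h
  have hF0 : (((F 0).re : ℂ) = F 0) ∧ 0 ≤ (F 0).re := by
    have h := hFre 0
    simpa using h
  have expand : ∀ (n : ℕ) (q : ℚ),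
      ω (star (a + (q : ℂ) • (⇑γ)^[n] a) * (a + (q : ℂ) • (⇑γ)^[n] a))
        = F 0 + 2 * (q : ℂ) * F n + (q : ℂ) ^ 2 * F (2 * n) := by
    intro n q
    have hs : star ((q : ℂ) • (⇑γ)^[n] a) = (q : ℂ) • star ((⇑γ)^[n] a) :=
      star_ratCast_smul q _
    have h0 : ω (star a * a) = F 0 := by simp [hF]
    have hn : ω (star a * (⇑γ)^[n] a) = F n := by simp [hF]
    rw [star_add, hs, add_mul, mul_add, mul_add]
    simp only [smul_mul_assoc, mul_smul_comm, smul_smul, map_add, map_smul, smul_eq_mul]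
    rw [hFn n, hF2 n, h0, hn]
    ring
  have hreal : ∀ n : ℕ, ((F n).re : ℂ) = F n := by
    intro n
    have h1 := expand n 1
    set X : C := a + ((1 : ℚ) : ℂ) • (⇑γ)^[n] a with hX
    obtain ⟨e1, -⟩ := hpos' X
    have hv : F n = (ω (star X * X) - F 0 - F (2 * n)) / 2 := by
      rw [h1]; push_cast; ring
    have him : (F n).im = 0 := by
      rw [hv, ← e1, ← hF0.1, ← (hFre n).1,
        show ((((ω (star X * X)).re : ℝ) : ℂ) - (((F 0).re : ℝ) : ℂ) - (((F (2 * n)).re : ℝ) : ℂ)) / 2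
            = ((((ω (star X * X)).re - (F 0).re - (F (2 * n)).re) / 2 : ℝ) : ℂ) by push_cast; ring]
      simp
    apply Complex.ext <;> simp [him]
  set f : ℕ → ℝ := fun n => (F n).re with hf
  have hcast : ∀ n, F n = ((f n : ℝ) : ℂ) := fun n => (hreal n).symm
  have hf2 : ∀ n, 0 ≤ f (2 * n) := fun n => (hFre n).2
  have hf0 : 0 ≤ f 0 := hF0.2
  have hquadR : ∀ (n : ℕ) (t : ℝ), 0 ≤ f (2 * n) * (t * t) + (2 * f n) * t + f 0 := by
    intro n
    have hquadQ : ∀ q : ℚ, 0 ≤ f (2 * n) * ((q : ℝ) * (q : ℝ)) + (2 * f n) * (q : ℝ) + f 0 := by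
      intro q
      have h1 := expand n q
      have h2 := hpos (a + (q : ℂ) • (⇑γ)^[n] a)
      rw [h1, hcast 0, hcast n, hcast (2 * n)] at h2
      have h3 : (0 : ℂ) ≤ ((f (2 * n) * ((q : ℝ) * (q : ℝ)) + (2 * f n) * (q : ℝ) + f 0 : ℝ) : ℂ) := by
        convert h2 using 1
        push_cast
        ring
      obtain ⟨hre, -⟩ := Complex.le_def.mp h3
      simpa using hre
    have hcl : IsClosed {t : ℝ | 0 ≤ f (2 * n) * (t * t) + (2 * f n) * t + f 0} :=
      isClosed_le continuous_const (by fun_prop)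
    intro t
    exact Rat.denseRange_cast.induction_on t hcl hquadQ
  have hCS : ∀ n : ℕ, f n ^ 2 ≤ f 0 * f (2 * n) := by
    intro n
    have hd := discrim_le_zero (hquadR n)
    rw [discrim] at hd
    nlinarith [hd]
  obtain ⟨K, hK⟩ := hbdd a
  have hKb : ∀ n, |f n| ≤ K := by
    intro n
    have h := hK n
    have h2 : ‖F n‖ ≤ K := h
    rwa [hcast n, Complex.norm_real, Real.norm_eq_abs] at h2
  have hiter : ∀ k : ℕ, |f 1| ^ (2 ^ (k + 1)) ≤ f 0 ^ (2 ^ (k + 1) - 1) * f (2 ^ (k + 1)) := by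
    intro k
    induction k with
    | zero =>
        have h := hCS 1
        have : |f 1| ^ 2 = f 1 ^ 2 := sq_abs _
        simpa [this] using h
    | succ k ih =>
        have hm : (1 : ℕ) ≤ 2 ^ (k + 1) := Nat.one_le_two_pow
        have hfm : 0 ≤ f (2 ^ (k + 1)) := by
          have h := hf2 (2 ^ k)
          rwa [show 2 * 2 ^ k = 2 ^ (k + 1) by ring] at h
        have hstep : f (2 ^ (k + 1)) ^ 2 ≤ f 0 * f (2 ^ (k + 2)) := by
          have h := hCS (2 ^ (k + 1))
          rwa [show 2 * 2 ^ (k + 1) = 2 ^ (k + 2) by ring] at h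
        have h1 : (|f 1| ^ 2 ^ (k + 1)) ^ 2 ≤ (f 0 ^ (2 ^ (k + 1) - 1) * f (2 ^ (k + 1))) ^ 2 :=
          pow_le_pow_left₀ (by positivity) ih 2
        have hexp : 2 ^ (k + 2) = 2 ^ (k + 1) * 2 := by ring
        have hexp2 : (2 ^ (k + 1) - 1) * 2 + 1 = 2 ^ (k + 2) - 1 := by
          have h2m : 2 ^ (k + 2) = 2 * 2 ^ (k + 1) := by ring
          omega
        calc |f 1| ^ 2 ^ (k + 2) = (|f 1| ^ 2 ^ (k + 1)) ^ 2 := by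
              rw [← pow_mul, hexp]
          _ ≤ (f 0 ^ (2 ^ (k + 1) - 1) * f (2 ^ (k + 1))) ^ 2 := h1
          _ = f 0 ^ ((2 ^ (k + 1) - 1) * 2) * f (2 ^ (k + 1)) ^ 2 := by
              rw [mul_pow, ← pow_mul]
          _ ≤ f 0 ^ ((2 ^ (k + 1) - 1) * 2) * (f 0 * f (2 ^ (k + 2))) := by
              exact mul_le_mul_of_nonneg_left hstep (by positivity)
          _ = f 0 ^ (2 ^ (k + 2) - 1) * f (2 ^ (k + 2)) := by
              rw [← hexp2, pow_succ]
              ring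
  have hfinal : |f 1| ≤ f 0 := by
    by_contra hlt
    push_neg at hlt
    rcases eq_or_lt_of_le hf0 with h0 | h0
    · have h := hCS 1
      have h2 : f 1 ^ 2 ≤ 0 := by
        rw [← h0] at h
        simpa using h
      have h3 : f 1 = 0 := by nlinarith [sq_nonneg (f 1)]
      rw [h3] at hlt
      simp at hlt
      linarith
    · set ρ := |f 1| / f 0 with hρ
      have hρ1 : 1 < ρ := (one_lt_div h0).mpr hlt
      obtain ⟨N, hN⟩ := pow_unbounded_of_one_lt (K / f 0) hρ1
      have hNle : ρ ^ N ≤ ρ ^ (2 ^ (N + 1)) := by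
        apply pow_le_pow_right₀ hρ1.le
        calc N ≤ 2 ^ N := (Nat.lt_two_pow_self (n := N)).le
          _ ≤ 2 ^ (N + 1) := Nat.pow_le_pow_right (by norm_num) (Nat.le_succ N)
      have hiterN := hiter N
      have hmone : (1 : ℕ) ≤ 2 ^ (N + 1) := Nat.one_le_two_pow
      have hmK : |f 1| ^ (2 ^ (N + 1)) ≤ f 0 ^ (2 ^ (N + 1) - 1) * K := by
        refine hiterN.trans (mul_le_mul_of_nonneg_left ?_ (by positivity))
        exact (le_abs_self _).trans (hKb _)
      have hpow : ρ ^ (2 ^ (N + 1)) ≤ K / f 0 := by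
        rw [hρ, div_pow, div_le_div_iff₀ (by positivity) h0]
        calc |f 1| ^ 2 ^ (N + 1) * f 0 ≤ (f 0 ^ (2 ^ (N + 1) - 1) * K) * f 0 :=
              mul_le_mul_of_nonneg_right hmK h0.le
          _ = K * f 0 ^ 2 ^ (N + 1) := by
              rw [show f 0 ^ (2 ^ (N + 1) - 1) * K * f 0 = K * (f 0 ^ (2 ^ (N + 1) - 1) * f 0) by ring,
                ← pow_succ]
              congr 2
              omega
      linarith [hNle.trans hpow]
  have e1 : ω (star a * γ a) = F 1 := by simp [hF]
  have e0 : ω (star a * a) = F 0 := by simp [hF]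
  rw [e1, e0, hcast 1, hcast 0, Complex.norm_real, Real.norm_eq_abs]
  exact_mod_cast hfinal
end

section
/- Let γ be an automorphism of a unital *-algebra C with γ* = γ⁻¹, and let ω be a γ-invariant state on C satisfying the cluster property: lim_{n→∞} ω(A γⁿ(B)) = ω(A) ω(B) for all A, B ∈ C. If moreover ω(A* γ(A)) ≥ 0 for all A, then ω is a ground state for γ, i.e. 0 ≤ ω(A* γ(A)) ≤ ω(A* A) for all A ∈ C. -/
open scoped ComplexOrder
open Filter Topology

/-- A nonnegative, log-convex, bounded-above real sequence is nonincreasing at the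
first step: `y 1 ≤ y 0`. -/
lemma aux_logconvex_bounded (y : ℕ → ℝ) (hnn : ∀ n, 0 ≤ y n)
    (hlc : ∀ n, y (n + 1) ^ 2 ≤ y (n + 2) * y n)
    (hb : ∃ M, ∀ n, y n ≤ M) : y 1 ≤ y 0 := by
  by_contra h
  push_neg at h
  obtain ⟨M, hM⟩ := hb
  rcases eq_or_lt_of_le (hnn 0) with h0 | h0
  · have h1 := hlc 0
    nlinarith [hnn 1, hnn 2]
  · set q := y 1 / y 0 with hq
    have hq1 : 1 < q := (one_lt_div h0).mpr h
    have hqpos : (0 : ℝ) < q := lt_trans one_pos hq1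
    have step : ∀ n, 0 < y n ∧ q * y n ≤ y (n + 1) := by
      intro n
      induction n with
      | zero =>
        refine ⟨h0, ?_⟩
        rw [hq, div_mul_cancel₀ _ (ne_of_gt h0)]
      | succ n ih =>
        obtain ⟨hpos, hle⟩ := ih
        have h1 : 0 < y (n + 1) := lt_of_lt_of_le (mul_pos hqpos hpos) hle
        refine ⟨h1, ?_⟩
        have hlcn := hlc n
        nlinarith [mul_pos hqpos h1]
    have grow : ∀ n, y 0 * q ^ n ≤ y n := by
      intro n
      induction n with
      | zero => simp
      | succ n ih =>
        have hstep := (step n).2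
        have hp : (0 : ℝ) < q ^ n := pow_pos hqpos n
        calc y 0 * q ^ (n + 1) = q * (y 0 * q ^ n) := by ring
          _ ≤ q * y n := by nlinarith
          _ ≤ y (n + 1) := hstep
    obtain ⟨n, hn⟩ :=
      ((tendsto_pow_atTop_atTop_of_one_lt hq1).eventually_ge_atTop ((M + 1) / y 0)).exists
    have hMy : M + 1 ≤ y n := by
      calc M + 1 = y 0 * ((M + 1) / y 0) := by field_simp
        _ ≤ y 0 * q ^ n := by nlinarith
        _ ≤ y n := grow n
    linarith [hM n]

/-- Let `γ` be an automorphism of a unital `*`-algebra with `γ* = γ⁻¹`, and `ω` a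
`γ`-invariant state satisfying the cluster property `ω(a γⁿ(b)) → ω(a)ω(b)`.  If
moreover `ω(a* γ(a)) ≥ 0` for all `a`, then `ω` is a ground state for `γ`:
`0 ≤ ω(a* γ(a)) ≤ ω(a* a)`. -/
theorem cluster_implies_ground_state
    {C : Type*} [Ring C] [StarRing C] [Algebra ℂ C]
    (γ : C ≃ₐ[ℂ] C)
    (hγadj : ∀ a, star (γ (star a)) = γ.symm a)
    (ω : C →ₗ[ℂ] ℂ)
    (hone : ω 1 = 1)
    (hpos : ∀ a, 0 ≤ ω (star a * a))
    (hinv : ∀ a, ω (γ a) = ω a)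
    (hcluster : ∀ a b : C,
      Tendsto (fun n : ℕ => ω (a * (⇑γ)^[n] b)) atTop (nhds (ω a * ω b)))
    (hpos' : ∀ a, 0 ≤ ω (star a * γ a)) :
    ∀ a, 0 ≤ ω (star a * γ a) ∧ ω (star a * γ a) ≤ ω (star a * a) := by
  have hsg : ∀ c : C, star (γ c) = γ.symm (star c) := fun c => by
    simpa [star_star] using hγadj (star c)
  have it_mul : ∀ (m : ℕ) (u v : C), (⇑γ)^[m] (u * v) = (⇑γ)^[m] u * (⇑γ)^[m] v := by
    intro m
    induction m with
    | zero => simp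
    | succ m ih =>
      intro u v
      simp [Function.iterate_succ_apply', ih, map_mul]
  have it_add : ∀ (m : ℕ) (u v : C), (⇑γ)^[m] (u + v) = (⇑γ)^[m] u + (⇑γ)^[m] v := by
    intro m
    induction m with
    | zero => simp
    | succ m ih =>
      intro u v
      simp [Function.iterate_succ_apply', ih, map_add]
  have it_zsmul : ∀ (m : ℕ) (k : ℤ) (u : C), (⇑γ)^[m] (k • u) = k • (⇑γ)^[m] u := by
    intro m
    induction m with
    | zero => simp
    | succ m ih =>
      intro k u
      simp only [Function.iterate_succ_apply', ih]
      exact map_zsmul (γ : C ≃+* C).toRingHom.toAddMonoidHom k _ |>.symm ▸ rfl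
  have it_inv : ∀ (m : ℕ) (c : C), ω ((⇑γ)^[m] c) = ω c := by
    intro m
    induction m with
    | zero => simp
    | succ m ih =>
      intro c
      rw [Function.iterate_succ_apply', hinv, ih]
  have it_star : ∀ (m : ℕ) (c : C), (⇑γ)^[m] (star ((⇑γ)^[m] c)) = star c := by
    intro m
    induction m with
    | zero => simp
    | succ m ih =>
      intro c
      rw [Function.iterate_succ_apply' (⇑γ) m, Function.iterate_succ_apply (⇑γ) m c,
        ih (γ c), hsg, γ.apply_symm_apply]
  -- positivity of all the "n-step" forms
  have key_pos : ∀ (n : ℕ) (b : C), 0 ≤ ω (star b * (⇑γ)^[n] b) := by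
    intro n b
    obtain ⟨m, rfl | rfl⟩ := Nat.even_or_odd' n
    · have h1 : (⇑γ)^[m] (star ((⇑γ)^[m] b) * (⇑γ)^[m] b) = star b * (⇑γ)^[2 * m] b := by
        rw [it_mul, it_star, ← Function.iterate_add_apply]
        have : m + m = 2 * m := by omega
        rw [this]
      rw [← h1, it_inv]
      exact hpos _
    · have h1 : (⇑γ)^[m] (star ((⇑γ)^[m] b) * γ ((⇑γ)^[m] b))
          = star b * (⇑γ)^[2 * m + 1] b := by
        rw [it_mul, it_star, ← Function.iterate_succ_apply' (⇑γ) m b,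
          ← Function.iterate_add_apply]
        have : m + (m + 1) = 2 * m + 1 := by omega
        rw [this]
      rw [← h1, it_inv]
      exact hpos' _
  intro a
  set x : ℕ → ℂ := fun n => ω (star a * (⇑γ)^[n] a) with hxdef
  have hxnn : ∀ n, 0 ≤ x n := fun n => key_pos n a
  have hxim : ∀ n, (x n).im = 0 := fun n => ((Complex.le_def.mp (hxnn n)).2).symm
  set y : ℕ → ℝ := fun n => (x n).re with hydef
  have hynn : ∀ n, 0 ≤ y n := fun n => (Complex.le_def.mp (hxnn n)).1
  -- the mixed term
  have hmix : ∀ n : ℕ, ω (γ.symm (star a) * (⇑γ)^[n] a) = x (n + 1) := by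
    intro n
    rw [← hinv, map_mul, γ.apply_symm_apply, ← Function.iterate_succ_apply' (⇑γ) n a]
  -- quadratic positivity over the integers
  have quadZ : ∀ (n : ℕ) (p q : ℤ),
      0 ≤ (p * p : ℝ) * y n + (2 * (p * q) : ℝ) * y (n + 1) + (q * q : ℝ) * y (n + 2) := by
    intro n p q
    have hb := key_pos n (p • a + q • γ a)
    have hsd : star (p • a + q • γ a) = p • star a + q • γ.symm (star a) := by
      rw [star_add, star_zsmul, star_zsmul, hsg]
    have hgd : (⇑γ)^[n] (p • a + q • γ a) = p • (⇑γ)^[n] a + q • (⇑γ)^[n + 1] a := by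
      have h1 : (⇑γ)^[n] (p • a + q • γ a) = (⇑γ)^[n] (p • a) + (⇑γ)^[n] (q • γ a) :=
        it_add n _ _
      rw [h1, it_zsmul, it_zsmul, ← Function.iterate_succ_apply]
    rw [hsd, hgd] at hb
    have hexp : (p • star a + q • γ.symm (star a)) * (p • (⇑γ)^[n] a + q • (⇑γ)^[n + 1] a)
        = (p * p) • (star a * (⇑γ)^[n] a) + (q * p) • (star a * (⇑γ)^[n + 1] a)
          + (p * q) • (γ.symm (star a) * (⇑γ)^[n] a)
          + (q * q) • (γ.symm (star a) * (⇑γ)^[n + 1] a) := by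
      simp only [add_mul, mul_add, smul_mul_assoc, mul_smul_comm, smul_add, smul_smul]
      abel
    rw [hexp] at hb
    have hωz : ∀ (k : ℤ) (c : C), ω (k • c) = (k : ℂ) * ω c := by
      intro k c
      rw [map_zsmul, zsmul_eq_mul]
    simp only [map_add, hωz] at hb
    rw [hmix n, hmix (n + 1)] at hb
    have hre := (Complex.le_def.mp hb).1
    simp only [Complex.zero_re, Complex.add_re, Complex.mul_re, Complex.intCast_re,
      Complex.intCast_im, hxim, mul_zero, zero_mul, sub_zero] at hre
    have hre' : 0 ≤ (p * p : ℝ) * y n + (q * p : ℝ) * y (n + 1) + (p * q : ℝ) * y (n + 1)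
        + (q * q : ℝ) * y (n + 2) := by
      push_cast at hre ⊢
      have e1 : ω (star a * (⇑γ)^[n + 1] a) = x (n + 1) := rfl
      rw [e1] at hre
      exact hre
    push_cast at hre' ⊢
    nlinarith [hre']
  -- quadratic positivity over the reals, by density
  have quad : ∀ (n : ℕ) (t : ℝ),
      0 ≤ y (n + 2) * (t * t) + (2 * y (n + 1)) * t + y n := by
    intro n
    have hQ : ∀ r : ℚ, 0 ≤ y (n + 2) * ((r : ℝ) * (r : ℝ)) + (2 * y (n + 1)) * (r : ℝ) + y n := by
      intro r
      have hz := quadZ n (r.den : ℤ) r.num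
      have hden : (0 : ℝ) < (r.den : ℝ) := by positivity
      have hnum : (r.num : ℝ) = (r : ℝ) * (r.den : ℝ) := by
        rw [Rat.cast_def]
        field_simp
      push_cast at hz
      rw [hnum] at hz
      nlinarith [hz, mul_pos hden hden]
    have hcl : IsClosed {t : ℝ | 0 ≤ y (n + 2) * (t * t) + (2 * y (n + 1)) * t + y n} :=
      isClosed_le continuous_const (by fun_prop)
    intro t
    have hsub : Set.range ((↑) : ℚ → ℝ) ⊆
        {t : ℝ | 0 ≤ y (n + 2) * (t * t) + (2 * y (n + 1)) * t + y n} := by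
      rintro _ ⟨r, rfl⟩
      exact hQ r
    have : closure (Set.range ((↑) : ℚ → ℝ)) ⊆
        {t : ℝ | 0 ≤ y (n + 2) * (t * t) + (2 * y (n + 1)) * t + y n} :=
      hcl.closure_subset_iff.mpr hsub
    have hmem : t ∈ closure (Set.range ((↑) : ℚ → ℝ)) := by
      rw [Rat.denseRange_cast.closure_range]
      trivial
    exact this hmem
  -- log-convexity
  have hlc : ∀ n, y (n + 1) ^ 2 ≤ y (n + 2) * y n := by
    intro n
    have hd := discrim_le_zero (quad n)
    rw [discrim] at hd
    nlinarith [hd]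
  -- boundedness from the cluster property
  have hconv : Tendsto y atTop (𝓝 ((ω (star a) * ω a).re)) :=
    (Complex.continuous_re.tendsto _).comp (hcluster (star a) a)
  have hbdd : ∃ M, ∀ n, y n ≤ M := by
    obtain ⟨M, hM⟩ := hconv.bddAbove_range
    exact ⟨M, fun n => hM ⟨n, rfl⟩⟩
  have hy10 : y 1 ≤ y 0 := aux_logconvex_bounded y hynn hlc hbdd
  -- conclude
  have hx1 : x 1 = ω (star a * γ a) := by simp [hxdef]
  have hx0 : x 0 = ω (star a * a) := by simp [hxdef]
  refine ⟨hpos' a, ?_⟩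
  rw [← hx1, ← hx0]
  rw [Complex.le_def]
  exact ⟨hy10, by rw [hxim 1, hxim 0]⟩
end

section
/- Let ω be a state on a unital *-algebra A which is invariant under an automorphism α satisfying ω(A* α(A)) ≥ 0 and ω(A* α(A)) ≤ ω(A*A) for all A ∈ A (ground state property), and let (π, H, Ω) be the GNS triple of ω. Then the assignment T π(A)Ω := π(α(A))Ω is well-defined and extends to a bounded positive operator T on H with 0 ≤ T ≤ 1 and T Ω = Ω. -/
open scoped ComplexOrder

private lemma cs_aux' {E : Type*} [AddCommGroup E] [Module ℂ E]
    {H : Type*} [NormedAddCommGroup H] [InnerProductSpace ℂ H]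
    (u v : E →ₗ[ℂ] H) (hpos : ∀ z : E, 0 ≤ (inner ℂ (u z) (v z) : ℂ)) (x y : E) :
    Complex.normSq (inner ℂ (u x) (v y) : ℂ) ≤
      (inner ℂ (u x) (v x) : ℂ).re * (inner ℂ (u y) (v y) : ℂ).re := by
  set A0 : ℂ := inner ℂ (u x) (v x) with hA0
  set D : ℂ := inner ℂ (u y) (v y) with hD
  set s : ℂ := inner ℂ (u x) (v y) with hs
  set r : ℂ := inner ℂ (u y) (v x) with hr
  have hexp : ∀ t : ℂ, (inner ℂ (u (x + t • y)) (v (x + t • y)) : ℂ)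
      = A0 + (starRingEnd ℂ) t * r + t * s + (starRingEnd ℂ) t * t * D := by
    intro t
    simp only [map_add, map_smul, inner_add_left, inner_add_right,
      inner_smul_left, inner_smul_right, hA0, hD, hs, hr]
    ring
  have hP : ∀ t : ℂ, 0 ≤ A0 + (starRingEnd ℂ) t * r + t * s + (starRingEnd ℂ) t * t * D := by
    intro t; rw [← hexp t]; exact hpos _
  have hA0im : A0.im = 0 := ((Complex.nonneg_iff.mp (hpos x)).2).symm
  have hDim : D.im = 0 := ((Complex.nonneg_iff.mp (hpos y)).2).symm
  have hA0re : 0 ≤ A0.re := (Complex.nonneg_iff.mp (hpos x)).1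
  have hDre : 0 ≤ D.re := (Complex.nonneg_iff.mp (hpos y)).1
  -- r = conj s
  have h1 := (Complex.nonneg_iff.mp (hP 1)).2
  have h2 := (Complex.nonneg_iff.mp (hP Complex.I)).2
  have hrs : r = (starRingEnd ℂ) s := by
    simp only [Complex.add_im, Complex.mul_im, Complex.one_re, Complex.one_im,
      Complex.I_re, Complex.I_im, map_one, Complex.conj_I, Complex.neg_re, Complex.neg_im,
      Complex.mul_re] at h1 h2
    apply Complex.ext <;> simp only [Complex.conj_re, Complex.conj_im] <;> nlinarith [hA0im, hDim]
  -- quadratic in real c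
  have hq : ∀ c : ℝ, 0 ≤ (Complex.normSq s * D.re) * (c * c) + (2 * Complex.normSq s) * c + A0.re := by
    intro c
    have := (Complex.nonneg_iff.mp (hP ((c : ℂ) * (starRingEnd ℂ) s))).1
    have hconj : (starRingEnd ℂ) ((c : ℂ) * (starRingEnd ℂ) s) = (c : ℂ) * s := by
      simp [map_mul]
    rw [hconj, hrs] at this
    have hrw : (c : ℂ) * s * ((starRingEnd ℂ) s) = (c : ℂ) * Complex.normSq s := by
      rw [mul_assoc, Complex.mul_conj]
    have hrw2 : (c : ℂ) * ((starRingEnd ℂ) s) * s = (c : ℂ) * Complex.normSq s := by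
      rw [mul_assoc, mul_comm ((starRingEnd ℂ) s) s, Complex.mul_conj]
    rw [hrw, hrw2] at this
    -- now: 0 ≤ (A0 + c*normSq s + c*normSq s + (c*s)*(c*conj s)... recompute
    have hrw3 : (c : ℂ) * s * ((c : ℂ) * (starRingEnd ℂ) s) = ((c^2 : ℝ) : ℂ) * Complex.normSq s := by
      push_cast; ring_nf; rw [mul_assoc, Complex.mul_conj]
    rw [hrw3] at this
    simp only [Complex.add_re, Complex.mul_re, Complex.mul_im, Complex.ofReal_re,
      Complex.ofReal_im, Complex.normSq_eq_norm_sq, hDim] at this ⊢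
    nlinarith [this, Complex.sq_norm s]
  have hd := discrim_le_zero hq
  simp only [discrim] at hd
  -- (2 m)^2 - 4 (m d) a ≤ 0
  rcases eq_or_lt_of_le (Complex.normSq_nonneg s) with hm | hm
  · rw [← hm]; positivity
  · nlinarith [hd]

set_option maxHeartbeats 1000000 in
/-- Let `ω` be a state on a unital `*`-algebra `A`, invariant under an automorphism `α`
with the ground state property `0 ≤ ω(a* α(a)) ≤ ω(a* a)`, and let `(π, H, Ω)` be the
GNS triple of `ω`.  Then `T π(a)Ω := π(α(a))Ω` is well-defined and extends to a bounded
positive operator `T` on `H` with `0 ≤ T ≤ 1` and `T Ω = Ω`. -/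
theorem gns_transfer_matrix_exists
    {A : Type*} [Ring A] [StarRing A] [Algebra ℂ A]
    {H : Type*} [NormedAddCommGroup H] [InnerProductSpace ℂ H] [CompleteSpace H]
    (π : A →⋆ₐ[ℂ] (H →L[ℂ] H)) (Ω : H)
    (hcyc : Dense (Set.range fun a : A => π a Ω))
    (ω : A →ₗ[ℂ] ℂ)
    (hω : ∀ a, ω a = (inner ℂ Ω (π a Ω) : ℂ))
    (hone : ω 1 = 1)
    (α : A ≃ₐ[ℂ] A)
    (hinv : ∀ a, ω (α a) = ω a)
    (hgs1 : ∀ a, 0 ≤ ω (star a * α a))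
    (hgs2 : ∀ a, ω (star a * α a) ≤ ω (star a * a)) :
    ∃ T : H →L[ℂ] H,
      (∀ a, T (π a Ω) = π (α a) Ω) ∧
      (∀ ψ : H, 0 ≤ (inner ℂ ψ (T ψ) : ℂ)) ∧
      ‖T‖ ≤ 1 ∧
      T Ω = Ω := by
  -- the GNS inner product formula
  have hip : ∀ x y : A, (inner ℂ (π x Ω) (π y Ω) : ℂ) = ω (star x * y) := by
    intro x y
    rw [hω, map_mul, map_star, ContinuousLinearMap.mul_apply,
      ContinuousLinearMap.star_eq_adjoint, ContinuousLinearMap.adjoint_inner_right]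
  -- the linear maps a ↦ π a Ω and a ↦ π (α a) Ω
  set L : A →ₗ[ℂ] H :=
    { toFun := fun a => π a Ω
      map_add' := by intro a b; simp
      map_smul' := by intro c a; simp } with hL
  set g : A →ₗ[ℂ] H := L.comp α.toLinearMap with hg
  have hLa : ∀ a, L a = π a Ω := fun a => rfl
  have hga : ∀ a, g a = π (α a) Ω := fun a => rfl
  have hre : ∀ a : A, (ω (star a * a)).re = ‖π a Ω‖ ^ 2 := by
    intro a
    rw [← hip a a, ← inner_self_eq_norm_sq (𝕜 := ℂ)]
    rfl
  have hposz : ∀ z : A, 0 ≤ (inner ℂ (L z) (g z) : ℂ) := by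
    intro z
    rw [hLa, hga, hip]
    exact hgs1 z
  have hcs := cs_aux' L g hposz
  -- the key norm estimate
  have key : ∀ a : A, ‖π (α a) Ω‖ ≤ ‖π a Ω‖ := by
    intro a
    have h1 := hcs (α a) a
    simp only [hLa, hga] at h1
    have hvv : (inner ℂ (π (α a) Ω) (π (α a) Ω) : ℂ) = ((‖π (α a) Ω‖ : ℂ)) ^ 2 :=
      inner_self_eq_norm_sq_to_K _
    have hns : Complex.normSq (((‖π (α a) Ω‖ : ℝ) : ℂ) ^ 2) = (‖π (α a) Ω‖ ^ 2) ^ 2 := by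
      rw [← Complex.ofReal_pow, Complex.normSq_ofReal]; ring
    rw [hvv, hns] at h1
    have h1' : (‖π (α a) Ω‖ ^ 2) ^ 2 ≤
        (inner ℂ (π (α a) Ω) (π (α (α a)) Ω) : ℂ).re * (inner ℂ (π a Ω) (π (α a) Ω) : ℂ).re := h1
    have hf1 : (inner ℂ (π (α a) Ω) (π (α (α a)) Ω) : ℂ).re ≤ ‖π (α a) Ω‖ ^ 2 := by
      rw [hip, ← hre (α a)]
      exact (Complex.le_def.mp (hgs2 (α a))).1
    have hf2 : (inner ℂ (π a Ω) (π (α a) Ω) : ℂ).re ≤ ‖π a Ω‖ ^ 2 := by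
      rw [hip, ← hre a]
      exact (Complex.le_def.mp (hgs2 a)).1
    have hf1nn : 0 ≤ (inner ℂ (π (α a) Ω) (π (α (α a)) Ω) : ℂ).re := by
      rw [hip]; exact (Complex.nonneg_iff.mp (hgs1 (α a))).1
    have hf2nn : 0 ≤ (inner ℂ (π a Ω) (π (α a) Ω) : ℂ).re := by
      rw [hip]; exact (Complex.nonneg_iff.mp (hgs1 a)).1
    by_contra hcon
    push_neg at hcon
    have hx : (0:ℝ) < ‖π (α a) Ω‖ := lt_of_le_of_lt (norm_nonneg _) hcon
    have hprod : (inner ℂ (π (α a) Ω) (π (α (α a)) Ω) : ℂ).re * (inner ℂ (π a Ω) (π (α a) Ω) : ℂ).re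
        ≤ ‖π (α a) Ω‖ ^ 2 * ‖π a Ω‖ ^ 2 := mul_le_mul hf1 hf2 hf2nn (sq_nonneg _)
    have h5 : ‖π a Ω‖ ^ 2 < ‖π (α a) Ω‖ ^ 2 := by
      nlinarith [norm_nonneg (π a Ω)]
    have h6 : ‖π (α a) Ω‖ ^ 2 * ‖π a Ω‖ ^ 2 < (‖π (α a) Ω‖ ^ 2) ^ 2 := by
      have h7 := mul_lt_mul_of_pos_left h5 (pow_pos hx 2)
      simpa [pow_two] using h7
    linarith [le_trans h1' hprod]
  have keyg : ∀ a : A, ‖g a‖ ≤ ‖L a‖ := key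
  -- factor through the quotient
  have hker : LinearMap.ker L ≤ LinearMap.ker g := by
    intro a ha
    rw [LinearMap.mem_ker] at ha ⊢
    have := keyg a
    rw [ha, norm_zero] at this
    exact norm_le_zero_iff.mp this
  set f₀ : (A ⧸ LinearMap.ker L) →ₗ[ℂ] H := (LinearMap.ker L).liftQ g hker with hf₀
  set e₁ := L.quotKerEquivRange with he₁
  set f₁ : LinearMap.range L →ₗ[ℂ] H := f₀.comp e₁.symm.toLinearMap with hf₁
  have hf₁a : ∀ a : A, f₁ ⟨L a, LinearMap.mem_range_self L a⟩ = g a := by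
    intro a
    have h2 : e₁.symm ⟨L a, LinearMap.mem_range_self L a⟩ = Submodule.Quotient.mk a := by
      rw [LinearEquiv.symm_apply_eq]
      exact Subtype.ext (L.quotKerEquivRange_apply_mk a).symm
    rw [hf₁, LinearMap.comp_apply]
    erw [h2]
    simp [hf₀]
  have hbound : ∀ s : LinearMap.range L, ‖f₁ s‖ ≤ 1 * ‖s‖ := by
    rintro ⟨_, a, rfl⟩
    rw [one_mul, hf₁a a]
    exact keyg a
  set f : (LinearMap.range L) →L[ℂ] H := f₁.mkContinuous 1 hbound with hf
  set e : (LinearMap.range L) →L[ℂ] H := (LinearMap.range L).subtypeL with he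
  have hui : IsUniformInducing e := isometry_subtype_coe.isUniformInducing
  have hdr : DenseRange e := by
    have : Set.range e = (LinearMap.range L : Set H) := Subtype.range_coe
    rw [DenseRange, this]
    have h3 : (LinearMap.range L : Set H) = Set.range fun a : A => π a Ω := by
      ext x
      simp only [SetLike.mem_coe, LinearMap.mem_range, Set.mem_range]
      rfl
    rw [h3]; exact hcyc
  refine ⟨f.extend e, ?_, ?_, ?_, ?_⟩ <;>
    [skip; skip; skip; skip]
  case _ =>
    intro a
    have : π a Ω = e ⟨L a, LinearMap.mem_range_self L a⟩ := rfl
    rw [this, ContinuousLinearMap.extend_eq (h_dense := hdr) (h_e := hui)]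
    show f₁ _ = _
    rw [hf₁a a]
    rfl
  case _ =>
    set T := f.extend e with hT
    have hTa : ∀ a : A, T (π a Ω) = π (α a) Ω := by
      intro a
      have h4 : π a Ω = e ⟨L a, LinearMap.mem_range_self L a⟩ := rfl
      rw [h4, hT, ContinuousLinearMap.extend_eq (h_dense := hdr) (h_e := hui)]
      show f₁ _ = _
      rw [hf₁a a]
      rfl
    have hclosed : IsClosed {ψ : H | 0 ≤ (inner ℂ ψ (T ψ) : ℂ)} := by
      have hcont : Continuous fun ψ : H => (inner ℂ ψ (T ψ) : ℂ) :=
        continuous_id.inner T.continuous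
      have h5 : {ψ : H | 0 ≤ (inner ℂ ψ (T ψ) : ℂ)}
          = (fun ψ : H => (inner ℂ ψ (T ψ) : ℂ)) ⁻¹' {z : ℂ | 0 ≤ z} := rfl
      rw [h5]
      refine IsClosed.preimage hcont ?_
      have h6 : {z : ℂ | 0 ≤ z} = Complex.re ⁻¹' (Set.Ici 0) ∩ Complex.im ⁻¹' {0} := by
        ext z
        simp [Complex.nonneg_iff, eq_comm]
      rw [h6]
      exact (isClosed_Ici.preimage Complex.continuous_re).inter
        (isClosed_singleton.preimage Complex.continuous_im)
    have hdr2 : DenseRange fun a : A => π a Ω := hcyc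
    exact isClosed_property hdr2 hclosed fun a => by
      rw [hTa a, hip]; exact hgs1 a
  case _ =>
    set T := f.extend e with hT
    have hTa : ∀ a : A, T (π a Ω) = π (α a) Ω := by
      intro a
      have h4 : π a Ω = e ⟨L a, LinearMap.mem_range_self L a⟩ := rfl
      rw [h4, hT, ContinuousLinearMap.extend_eq (h_dense := hdr) (h_e := hui)]
      show f₁ _ = _
      rw [hf₁a a]
      rfl
    refine T.opNorm_le_bound zero_le_one ?_
    have hclosed : IsClosed {ψ : H | ‖T ψ‖ ≤ 1 * ‖ψ‖} :=
      isClosed_le (T.continuous.norm) (continuous_const.mul continuous_norm)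
    have hdr2 : DenseRange fun a : A => π a Ω := hcyc
    exact isClosed_property hdr2 hclosed fun a => by
      rw [hTa a, one_mul]; exact key a
  case _ =>
    have h7 : Ω = π 1 Ω := by rw [map_one]; rfl
    conv_lhs => rw [h7]
    have h4 : π (1 : A) Ω = e ⟨L 1, LinearMap.mem_range_self L 1⟩ := rfl
    rw [h4, ContinuousLinearMap.extend_eq (h_dense := hdr) (h_e := hui)]
    show f₁ _ = _
    rw [hf₁a 1, hga, map_one, map_one]
    rfl
end

section
/- Let ω be an α-invariant ground state on a unital *-algebra A satisfying the cluster property lim_{n→∞} ω(A αⁿ(B)) = ω(A)ω(B) for all A, B ∈ A. Let T be the associated GNS transfer matrix with T π(A)Ω = π(α(A))Ω and 0 ≤ T ≤ 1. Then the eigenspace of T for the eigenvalue 1 is one-dimensional, spanned by Ω. -/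
open scoped ComplexOrder
open Filter Topology

/-- Let `ω` be an `α`-invariant ground state on a unital `*`-algebra satisfying the
cluster property `ω(a αⁿ(b)) → ω(a)ω(b)`, and let `T` be the GNS transfer matrix with
`T π(a)Ω = π(α(a))Ω` and `0 ≤ T ≤ 1`.  Then the eigenspace of `T` for the eigenvalue `1`
is one-dimensional, spanned by `Ω`. -/
theorem gns_transfer_matrix_vacuum_unique
    {A : Type*} [Ring A] [StarRing A] [Algebra ℂ A]
    {H : Type*} [NormedAddCommGroup H] [InnerProductSpace ℂ H] [CompleteSpace H]
    (π : A →⋆ₐ[ℂ] (H →L[ℂ] H)) (Ω : H)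
    (hcyc : Dense (Set.range fun a : A => π a Ω))
    (ω : A →ₗ[ℂ] ℂ)
    (hω : ∀ a, ω a = (inner ℂ Ω (π a Ω) : ℂ))
    (hone : ω 1 = 1)
    (α : A ≃ₐ[ℂ] A)
    (hinv : ∀ a, ω (α a) = ω a)
    (hgs1 : ∀ a, 0 ≤ ω (star a * α a))
    (hgs2 : ∀ a, ω (star a * α a) ≤ ω (star a * a))
    (hcluster : ∀ a b : A,
      Tendsto (fun n : ℕ => ω (a * (⇑α)^[n] b)) atTop (nhds (ω a * ω b)))
    (T : H →L[ℂ] H)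
    (hT : ∀ a, T (π a Ω) = π (α a) Ω)
    (hTpos : ∀ ψ : H, 0 ≤ (inner ℂ ψ (T ψ) : ℂ))
    (hTnorm : ‖T‖ ≤ 1) :
    {ψ : H | T ψ = ψ} = {ψ : H | ∃ c : ℂ, ψ = c • Ω} := by
  -- basic facts
  have hπ1 : π (1 : A) Ω = Ω := by rw [map_one]; rfl
  have hTΩ : T Ω = Ω := by
    have := hT 1
    rwa [hπ1, map_one, hπ1] at this
  have hΩΩ : (inner ℂ Ω Ω : ℂ) = 1 := by
    have := hω 1
    rw [hπ1, hone] at this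
    exact this.symm
  have hnormΩ : ‖Ω‖ = 1 := by
    have h1 : RCLike.re (inner ℂ Ω Ω : ℂ) = ‖Ω‖ ^ 2 := inner_self_eq_norm_sq (𝕜 := ℂ) Ω
    rw [hΩΩ] at h1
    simp only [RCLike.one_re] at h1
    nlinarith [norm_nonneg Ω]
  -- T is symmetric
  have hsym : (T : H →ₗ[ℂ] H).IsSymmetric := by
    rw [LinearMap.isSymmetric_iff_inner_map_self_real]
    intro v
    have h := hTpos v
    have him : (inner ℂ v (T v) : ℂ).im = 0 := by
      rw [Complex.le_def] at h
      exact h.2.symm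
    have : (inner ℂ ((T : H →ₗ[ℂ] H) v) v : ℂ) = (starRingEnd ℂ) (inner ℂ v (T v) : ℂ) := by
      simp [inner_conj_symm]
    rw [this, Complex.conj_conj]
    exact (Complex.conj_eq_iff_im.mpr him).symm
  have hsym' : ∀ x y : H, (inner ℂ x (T y) : ℂ) = inner ℂ (T x) y := by
    intro x y
    exact (hsym x y).symm
  -- inner ℂ products with vectors in the cyclic range
  have hinner : ∀ b c : A, (inner ℂ (π b Ω) (π c Ω) : ℂ) = ω (star b * c) := by
    intro b c
    rw [hω, map_mul]
    have : π (star b) = ContinuousLinearMap.adjoint (π b) := by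
      rw [map_star, ← ContinuousLinearMap.star_eq_adjoint]
    rw [ContinuousLinearMap.mul_apply, this, ContinuousLinearMap.adjoint_inner_right]
  -- iterates
  have hiter : ∀ (a : A) (n : ℕ), π ((⇑α)^[n] a) Ω = T^[n] (π a Ω) := by
    intro a n
    induction n with
    | zero => rfl
    | succ n ih =>
      rw [Function.iterate_succ_apply', Function.iterate_succ_apply', ← ih, ← hT]
  have hbound : ∀ (a : A) (n : ℕ), ‖π ((⇑α)^[n] a) Ω‖ ≤ ‖π a Ω‖ := by
    intro a n
    rw [hiter]
    induction n with
    | zero => simp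
    | succ n ih =>
      rw [Function.iterate_succ_apply']
      calc ‖T (T^[n] (π a Ω))‖ ≤ ‖T‖ * ‖T^[n] (π a Ω)‖ := T.le_opNorm _
        _ ≤ 1 * ‖π a Ω‖ := by
            apply mul_le_mul hTnorm ih (norm_nonneg _) zero_le_one
        _ = ‖π a Ω‖ := one_mul _
  ext ψ
  simp only [Set.mem_setOf_eq]
  constructor
  · intro hψ
    -- Step A : ⟪ψ, π (αⁿ a) Ω⟫ is constant in n
    have hconst : ∀ (a : A) (n : ℕ),
        (inner ℂ ψ (π ((⇑α)^[n] a) Ω) : ℂ) = inner ℂ ψ (π a Ω) := by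
      intro a n
      induction n with
      | zero => rfl
      | succ n ih =>
        rw [Function.iterate_succ_apply', ← hT, hsym' ψ _, hψ, ih]
    -- Step B : the key identity
    have hkey : ∀ a : A, (inner ℂ ψ (π a Ω) : ℂ) = inner ℂ ψ Ω * inner ℂ Ω (π a Ω) := by
      intro a
      set L : ℂ := inner ℂ ψ Ω * inner ℂ Ω (π a Ω) with hL
      have hle : ∀ ε : ℝ, 0 < ε →
          ‖(inner ℂ ψ (π a Ω) : ℂ) - L‖ ≤ ε * (2 * ‖π a Ω‖ + 1) := by
        intro ε hε
        obtain ⟨y, ⟨b, rfl⟩, hb⟩ := hcyc.exists_dist_lt ψ hε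
        -- cluster for b
        have hclb : Tendsto (fun n : ℕ => ω (star b * (⇑α)^[n] a)) atTop
            (nhds (ω (star b) * ω a)) := hcluster (star b) a
        have hLb : ω (star b) * ω a =
            (inner ℂ (π b Ω) Ω : ℂ) * inner ℂ Ω (π a Ω) := by
          have h1 : ω (star b) = (inner ℂ (π b Ω) Ω : ℂ) := by
            have := hinner b 1
            rw [mul_one, hπ1] at this
            exact this.symm
          rw [h1, hω]
        rw [hLb] at hclb
        -- pick n with the cluster term small
        obtain ⟨N, hN⟩ := Metric.tendsto_atTop.mp hclb ε hε
        have hn := hN N le_rfl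
        rw [dist_eq_norm] at hn
        have e1 : (inner ℂ ψ (π a Ω) : ℂ) = inner ℂ ψ (π ((⇑α)^[N] a) Ω) :=
          (hconst a N).symm
        set x := π ((⇑α)^[N] a) Ω with hx
        have split : (inner ℂ ψ x : ℂ) - L =
            (inner ℂ (ψ - π b Ω) x : ℂ)
            + ((ω (star b * (⇑α)^[N] a)) - (inner ℂ (π b Ω) Ω : ℂ) * inner ℂ Ω (π a Ω))
            + ((inner ℂ (π b Ω - ψ) Ω : ℂ) * inner ℂ Ω (π a Ω)) := by
          rw [inner_sub_left, inner_sub_left, ← hinner b _, hL]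
          ring
        rw [e1, split]
        have b1 : ‖(inner ℂ (ψ - π b Ω) x : ℂ)‖ ≤ ε * ‖π a Ω‖ := by
          calc ‖(inner ℂ (ψ - π b Ω) x : ℂ)‖ ≤ ‖ψ - π b Ω‖ * ‖x‖ :=
                norm_inner_le_norm _ _
            _ ≤ ε * ‖π a Ω‖ := by
                apply mul_le_mul (le_of_lt (by rwa [dist_eq_norm] at hb))
                  (hbound a N) (norm_nonneg _) (le_of_lt hε)
        have b3 : ‖(inner ℂ (π b Ω - ψ) Ω : ℂ) * inner ℂ Ω (π a Ω)‖ ≤ ε * ‖π a Ω‖ := by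
          rw [norm_mul]
          have h1 : ‖(inner ℂ (π b Ω - ψ) Ω : ℂ)‖ ≤ ε := by
            calc ‖(inner ℂ (π b Ω - ψ) Ω : ℂ)‖ ≤ ‖π b Ω - ψ‖ * ‖Ω‖ :=
                  norm_inner_le_norm _ _
              _ ≤ ε := by
                  rw [hnormΩ, mul_one, ← dist_eq_norm, dist_comm]
                  exact le_of_lt hb
          have h2 : ‖(inner ℂ Ω (π a Ω) : ℂ)‖ ≤ ‖π a Ω‖ := by
            calc ‖(inner ℂ Ω (π a Ω) : ℂ)‖ ≤ ‖Ω‖ * ‖π a Ω‖ := norm_inner_le_norm _ _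
              _ = ‖π a Ω‖ := by rw [hnormΩ, one_mul]
          exact mul_le_mul h1 h2 (norm_nonneg _) (le_of_lt hε)
        have htri := norm_add₃_le (a := (inner ℂ (ψ - π b Ω) x : ℂ))
          (b := (ω (star b * (⇑α)^[N] a)) - (inner ℂ (π b Ω) Ω : ℂ) * inner ℂ Ω (π a Ω))
          (c := (inner ℂ (π b Ω - ψ) Ω : ℂ) * inner ℂ Ω (π a Ω))
        have : ε * ‖π a Ω‖ + ε + ε * ‖π a Ω‖ = ε * (2 * ‖π a Ω‖ + 1) := by ring
        linarith
      -- conclude equality from the ε bound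
      have h0 : ‖(inner ℂ ψ (π a Ω) : ℂ) - L‖ ≤ 0 := by
        apply le_of_forall_pos_le_add
        intro ε hε
        have hC : (0:ℝ) < 2 * ‖π a Ω‖ + 1 := by positivity
        have := hle (ε / (2 * ‖π a Ω‖ + 1)) (by positivity)
        rw [div_mul_cancel₀ _ (ne_of_gt hC)] at this
        linarith
      exact sub_eq_zero.mp (norm_le_zero_iff.mp h0)
    -- conclude ψ = c • Ω
    refine ⟨inner ℂ Ω ψ, ?_⟩
    have horth : ∀ a : A, (inner ℂ (ψ - (inner ℂ Ω ψ : ℂ) • Ω) (π a Ω) : ℂ) = 0 := by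
      intro a
      rw [inner_sub_left, inner_smul_left, hkey a, inner_conj_symm ψ Ω]
      ring
    have : ψ - (inner ℂ Ω ψ : ℂ) • Ω = 0 := by
      have hcont : Continuous fun x : H => (inner ℂ (ψ - (inner ℂ Ω ψ : ℂ) • Ω) x : ℂ) :=
        continuous_const.inner continuous_id
      have heq : (fun x : H => (inner ℂ (ψ - (inner ℂ Ω ψ : ℂ) • Ω) x : ℂ)) = fun _ => 0 := by
        apply Continuous.ext_on hcyc hcont continuous_const
        rintro x ⟨a, rfl⟩
        exact horth a
      have := congrFun heq (ψ - (inner ℂ Ω ψ : ℂ) • Ω)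
      exact inner_self_eq_zero.mp this
    exact sub_eq_zero.mp this
  · rintro ⟨c, rfl⟩
    rw [map_smul, hTΩ]
end

section
/- Let π be a cyclic representation of a unital *-algebra A on a Hilbert space H with cyclic vector Ω, and suppose T ∈ B(H) is a positive operator with Ad T ∘ π = π ∘ α on the dense domain, whose maximal spectral value ‖T‖ is a simple eigenvalue with eigenvector Ω. Then every bounded operator B commuting with both π(A) and T is a scalar multiple of the identity. -/
open scoped ComplexOrder

/-- Let `π` be a cyclic representation of a unital `*`-algebra on a Hilbert space `H`
with cyclic vector `Ω`, and `T` a positive bounded operator implementing an automorphism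
`α` on the dense domain, whose maximal spectral value `‖T‖` is a simple eigenvalue with
eigenvector `Ω`.  Then every bounded operator commuting with both `π(A)` and `T` is a
scalar multiple of the identity. -/
theorem commutant_of_dynamics_trivial
    {A : Type*} [Ring A] [StarRing A] [Algebra ℂ A]
    {H : Type*} [NormedAddCommGroup H] [InnerProductSpace ℂ H] [CompleteSpace H]
    (π : A →⋆ₐ[ℂ] (H →L[ℂ] H)) (Ω : H)
    (hcyc : Dense (Set.range fun a : A => π a Ω))
    (T : H →L[ℂ] H)
    (hTpos : ∀ ψ : H, 0 ≤ (inner ℂ ψ (T ψ) : ℂ))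
    (α : A ≃ₐ[ℂ] A)
    (hα : ∀ a b : A, T (π a (π b Ω)) = π (α a) (T (π b Ω)))
    (hTΩ : T Ω = (‖T‖ : ℂ) • Ω)
    (hsimple : ∀ ψ : H, T ψ = (‖T‖ : ℂ) • ψ → ∃ c : ℂ, ψ = c • Ω)
    (B : H →L[ℂ] H)
    (hBπ : ∀ a : A, B.comp (π a) = (π a).comp B)
    (hBT : B.comp T = T.comp B) :
    ∃ lam : ℂ, B = lam • (1 : H →L[ℂ] H) := by
  have hTB : T (B Ω) = (‖T‖ : ℂ) • B Ω := by
    have h1 : T (B Ω) = B (T Ω) := by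
      have := congrArg (fun f => f Ω) hBT
      simpa using this.symm
    rw [h1, hTΩ, map_smul]
  obtain ⟨c, hc⟩ := hsimple _ hTB
  refine ⟨c, ?_⟩
  have hfun : (B : H → H) = fun x => c • x := by
    apply Continuous.ext_on hcyc B.continuous (continuous_const_smul c)
    rintro _ ⟨a, rfl⟩
    have h2 := congrArg (fun f => f Ω) (hBπ a)
    simp only [ContinuousLinearMap.comp_apply] at h2
    simp [h2, hc, map_smul]
  ext x
  simpa using congrFun hfun x
end
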